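/- Let b be a prime, α, β > 1 reals, let 0 < γ_j^{(1)} ≤ 1 and 0 < γ_j^{(2)} ≤ 1 for all j, and let ν > 0 satisfy αν > 1 and βν > 1. Then for all s,t ∈ ℕ the family ((ρ_{α,γ^{(1)}}(k) · r_{β,γ^{(2)}}(l))^ν)_{(k,l) ∈ ℕ^s × ℤ^t} is summable and ∑_{(k,l) ∈ ℕ^s × ℤ^t} (ρ_{α,γ^{(1)}}(k) r_{β,γ^{(2)}}(l))^ν = ∏_{j=1}^s (1 + (γ_j^{(1)})^ν μ(αν)) · ∏_{j=1}^t (1 + 2(γ_j^{(2)})^ν ζ(βν)), where μ(x) = b^x(b−1)/(b^x − b) and ζ is the Riemann zeta function. -/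

import Mathlib

open scoped BigOperators
open scoped ENNReal NNReal

/-- The Walsh-space decay function ρ_{α,γ} : ℕ → ℝ,
    ρ_{α,γ}(0) = 1 and ρ_{α,γ}(k) = γ·b^{-α·⌊log_b k⌋} for k ≥ 1. -/
noncomputable def rho (b : ℕ) (α γ : ℝ) (k : ℕ) : ℝ :=
  if k = 0 then 1 else γ * (b : ℝ) ^ (-(α * (Nat.log b k : ℝ)))

/-- The Korobov-space decay function r_{β,γ} : ℤ → ℝ,
    r_{β,γ}(0) = 1 and r_{β,γ}(l) = γ·|l|^{-β} for l ≠ 0. -/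
noncomputable def rK (β γ : ℝ) (l : ℤ) : ℝ :=
  if l = 0 then 1 else γ * |(l : ℝ)| ^ (-β)

/-- μ(x) = b^x (b−1)/(b^x − b). -/
noncomputable def mu (b : ℕ) (x : ℝ) : ℝ :=
  ((b : ℝ) ^ x * ((b : ℝ) - 1)) / ((b : ℝ) ^ x - (b : ℝ))

/-- The Riemann zeta function, viewed as a real-valued function of a real argument. -/
noncomputable def zetaR (x : ℝ) : ℝ := (riemannZeta (x : ℂ)).re

/- ### Auxiliary lemmas -/

lemma my_summable_aux {x : ℝ} (hx : 1 < x) :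
    Summable (fun n : ℕ => ((n : ℝ) + 1) ^ (-x)) := by
  have := (Real.summable_nat_rpow_inv (p := x)).2 hx
  have h := (summable_nat_add_iff (f := fun n : ℕ => ((n : ℝ) ^ x)⁻¹) 1).2 this
  refine h.congr fun n => ?_
  rw [Real.rpow_neg (by positivity)]
  push_cast
  ring_nf

lemma my_zetaR_eq {x : ℝ} (hx : 1 < x) : zetaR x = ∑' n : ℕ, ((n : ℝ) + 1) ^ (-x) := by
  have h := zeta_eq_tsum_one_div_nat_add_one_cpow (s := (x : ℂ)) (by simpa using hx)
  have h2 : ∀ n : ℕ, (1 / ((n : ℂ) + 1) ^ (x : ℂ)) = ((((n : ℝ) + 1) ^ (-x) : ℝ) : ℂ) := by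
    intro n
    rw [Real.rpow_neg (by positivity), Complex.ofReal_inv, Complex.ofReal_cpow (by positivity)]
    push_cast
    rw [one_div]
  have h3 : riemannZeta (x : ℂ) = ((∑' n : ℕ, ((n : ℝ) + 1) ^ (-x) : ℝ) : ℂ) := by
    rw [h, Complex.ofReal_tsum]
    exact tsum_congr h2
  rw [zetaR, h3, Complex.ofReal_re]

lemma my_zetaR_nonneg {x : ℝ} (hx : 1 < x) : 0 ≤ zetaR x := by
  rw [my_zetaR_eq hx]
  exact tsum_nonneg fun n => by positivity

lemma my_rho_nonneg {b : ℕ} {α γ : ℝ} (hγ : 0 < γ) (k : ℕ) : 0 ≤ rho b α γ k := by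
  unfold rho; split <;> positivity

lemma my_rK_nonneg {β γ : ℝ} (hγ : 0 < γ) (l : ℤ) : 0 ≤ rK β γ l := by
  unfold rK; split <;> positivity

/-- Blockwise partial sums of the log-grouped series. -/
lemma my_block_sum (b : ℕ) (hb : 2 ≤ b) (X : ℝ≥0∞) (M : ℕ) :
    ∑ k ∈ Finset.range (b ^ M), (if k = 0 then 0 else X ^ Nat.log b k) =
      ∑ m ∈ Finset.range M, ((b ^ (m + 1) - b ^ m : ℕ) : ℝ≥0∞) * X ^ m := by
  induction M with
  | zero => simp
  | succ M ih =>
    have hpow : b ^ M ≤ b ^ (M + 1) := Nat.pow_le_pow_right (by omega) (by omega)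
    rw [Finset.range_eq_Ico, ← Finset.sum_Ico_consecutive _ (Nat.zero_le _) hpow,
      ← Finset.range_eq_Ico, ih, Finset.sum_range_succ]
    congr 1
    have hconst : ∀ k ∈ Finset.Ico (b ^ M) (b ^ (M + 1)),
        (if k = 0 then 0 else X ^ Nat.log b k) = X ^ M := by
      intro k hk
      rw [Finset.mem_Ico] at hk
      have hk0 : k ≠ 0 := by
        have : 1 ≤ b ^ M := Nat.one_le_pow _ _ (by omega)
        omega
      rw [if_neg hk0, Nat.log_eq_of_pow_le_of_lt_pow hk.1 hk.2]
    rw [Finset.sum_congr rfl hconst, Finset.sum_const, Nat.card_Ico, nsmul_eq_mul]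

/-- The grouped geometric series, in `ℝ≥0∞`. -/
lemma my_tsum_log (b : ℕ) (hb : 2 ≤ b) (X : ℝ≥0∞) :
    ∑' k : ℕ, (if k = 0 then 0 else X ^ Nat.log b k) =
      ((b - 1 : ℕ) : ℝ≥0∞) * (1 - (b : ℝ≥0∞) * X)⁻¹ := by
  have hcov : ∀ t : Finset ℕ, ∃ M : ℕ, t ⊆ Finset.range (b ^ M) := by
    intro t
    obtain ⟨n, hn⟩ := t.exists_nat_subset_range
    exact ⟨n, hn.trans (Finset.range_subset_range.2 (Nat.le_of_lt (Nat.lt_pow_self (n := n) (by omega : 1 < b))))⟩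
  rw [ENNReal.tsum_eq_iSup_sum' (fun M => Finset.range (b ^ M)) hcov]
  have : ∀ M, ∑ k ∈ Finset.range (b ^ M), (if k = 0 then 0 else X ^ Nat.log b k) =
      ∑ m ∈ Finset.range M, ((b - 1 : ℕ) : ℝ≥0∞) * ((b : ℝ≥0∞) * X) ^ m := by
    intro M
    rw [my_block_sum b hb X M]
    refine Finset.sum_congr rfl fun m _ => ?_
    have hnat : b ^ (m + 1) - b ^ m = (b - 1) * b ^ m := by
      rw [Nat.sub_mul, one_mul, pow_succ, Nat.mul_comm]
    rw [hnat, mul_pow]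
    push_cast
    ring
  simp_rw [this]
  rw [← ENNReal.tsum_eq_iSup_nat, ENNReal.tsum_mul_left, ENNReal.tsum_geometric]

/-- `mu` identity. -/
lemma my_mu_eq (b : ℕ) (hb : 2 ≤ b) {x : ℝ} (hx : 1 < x) :
    ((b : ℝ) - 1) * (1 - (b : ℝ) * (b : ℝ) ^ (-x))⁻¹ = mu b x := by
  have hb1 : (1 : ℝ) < b := by exact_mod_cast hb
  have hbx : (b : ℝ) ^ (1 : ℝ) < (b : ℝ) ^ x := Real.rpow_lt_rpow_left_iff hb1 |>.2 hx
  rw [Real.rpow_one] at hbx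
  have hbxpos : (0 : ℝ) < (b : ℝ) ^ x := Real.rpow_pos_of_pos (by linarith) x
  have hneg : (b : ℝ) ^ (-x) = ((b : ℝ) ^ x)⁻¹ := Real.rpow_neg (by positivity) x
  have hne : (b : ℝ) ^ x - (b : ℝ) ≠ 0 := by linarith
  have h1 : 1 - (b : ℝ) * ((b : ℝ) ^ x)⁻¹ = ((b : ℝ) ^ x - b) / (b : ℝ) ^ x := by
    field_simp
  rw [hneg, mu, h1, inv_div]
  field_simp

/-- One-dimensional Walsh sum, `ℝ≥0∞` version. -/
lemma my_tsum_rho (b : ℕ) (hb : 2 ≤ b) {α γ ν : ℝ} (hγ : 0 < γ) (hν : 0 < ν)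
    (hx : 1 < α * ν) :
    ∑' k : ℕ, ENNReal.ofReal (rho b α γ k ^ ν) =
      ENNReal.ofReal (1 + γ ^ ν * mu b (α * ν)) := by
  have hb0 : (0 : ℝ) ≤ b := by positivity
  set X : ℝ≥0∞ := ENNReal.ofReal ((b : ℝ) ^ (-(α * ν))) with hX
  have hterm : ∀ k : ℕ, ENNReal.ofReal (rho b α γ k ^ ν) =
      (if k = 0 then 1 else 0) +
        ENNReal.ofReal (γ ^ ν) * (if k = 0 then 0 else X ^ Nat.log b k) := by
    intro k
    by_cases hk : k = 0
    · simp [rho, hk]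
    · rw [if_neg hk, if_neg hk, zero_add, rho, if_neg hk]
      have h1 : ((b : ℝ) ^ (-(α * (Nat.log b k : ℝ)))) ^ ν =
          HPow.hPow (α := ℝ) (β := ℕ) ((b : ℝ) ^ (-(α * ν))) (Nat.log b k) := by
        rw [← Real.rpow_natCast ((b:ℝ) ^ (-(α * ν))) (Nat.log b k),
          ← Real.rpow_mul hb0, ← Real.rpow_mul hb0]
        ring_nf
      rw [Real.mul_rpow hγ.le (by positivity), h1, ENNReal.ofReal_mul (by positivity), hX,
        ← ENNReal.ofReal_pow (by positivity)]
  rw [tsum_congr hterm, ENNReal.tsum_add, ENNReal.tsum_mul_left, tsum_ite_eq,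
    my_tsum_log b hb X]
  have hc1 : ((b : ℝ) * (b : ℝ) ^ (-(α * ν))) < 1 := by
    have : (b : ℝ) * (b : ℝ) ^ (-(α * ν)) = (b : ℝ) ^ (1 - α * ν) := by
      rw [Real.rpow_sub (by positivity), Real.rpow_one, Real.rpow_neg (by positivity),
        div_eq_mul_inv]
    rw [this]
    exact Real.rpow_lt_one_of_one_lt_of_neg (by exact_mod_cast hb) (by linarith)
  have hbX : (b : ℝ≥0∞) * X = ENNReal.ofReal ((b : ℝ) * (b : ℝ) ^ (-(α * ν))) := by
    rw [ENNReal.ofReal_mul hb0, ENNReal.ofReal_natCast]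
  have hsub : (1 : ℝ≥0∞) - (b : ℝ≥0∞) * X =
      ENNReal.ofReal (1 - (b : ℝ) * (b : ℝ) ^ (-(α * ν))) := by
    rw [hbX, ← ENNReal.ofReal_one, ← ENNReal.ofReal_sub _ (by positivity)]
  have hposs : (0 : ℝ) < 1 - (b : ℝ) * (b : ℝ) ^ (-(α * ν)) := by linarith
  rw [hsub, ← ENNReal.ofReal_inv_of_pos hposs]
  have hble : (1 : ℝ) ≤ (b : ℝ) := by exact_mod_cast (by omega : 1 ≤ b)
  have hcast : ((b - 1 : ℕ) : ℝ≥0∞) = ENNReal.ofReal ((b : ℝ) - 1) := by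
    rw [← ENNReal.ofReal_natCast]
    congr 1
    have : (1:ℕ) ≤ b := by omega
    push_cast [this]
    ring
  have hmu := my_mu_eq b hb hx
  have hmu0 : 0 ≤ mu b (α * ν) := by
    rw [← hmu]
    have := inv_pos.2 hposs
    nlinarith
  rw [hcast, ← ENNReal.ofReal_mul (by linarith), ← ENNReal.ofReal_mul (by positivity), hmu,
    ← ENNReal.ofReal_one, ← ENNReal.ofReal_add (by norm_num) (by positivity)]

/-- One-dimensional Korobov sum, `ℝ≥0∞` version. -/
lemma my_tsum_rK (b : ℕ) {β γ ν : ℝ} (hγ : 0 < γ) (hν : 0 < ν) (hx : 1 < β * ν) :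
    ∑' l : ℤ, ENNReal.ofReal (rK β γ l ^ ν) =
      ENNReal.ofReal (1 + 2 * γ ^ ν * zetaR (β * ν)) := by
  set f : ℤ → ℝ≥0∞ := fun l => ENNReal.ofReal (rK β γ l ^ ν) with hf
  have hside : ∀ n : ℕ, ∀ l : ℤ, l = (n : ℤ) + 1 ∨ l = -((n : ℤ) + 1) →
      f l = ENNReal.ofReal (γ ^ ν * ((n : ℝ) + 1) ^ (-(β * ν))) := by
    intro n l hl
    have hl0 : l ≠ 0 := by rcases hl with h | h <;> omega
    have habs : |(l : ℝ)| = (n : ℝ) + 1 := by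
      rcases hl with h | h <;> subst h
      · push_cast
        rw [abs_of_nonneg (by positivity)]
      · have hc : ((-(↑n + 1) : ℤ) : ℝ) = -((n : ℝ) + 1) := by push_cast; ring
        rw [hc, abs_neg, abs_of_nonneg (by positivity)]
    rw [hf]
    simp only [rK, if_neg hl0, habs]
    congr 1
    rw [Real.mul_rpow hγ.le (by positivity), ← Real.rpow_mul (by positivity)]
    ring_nf
  have hsum : Summable (fun n : ℕ => ((n : ℝ) + 1) ^ (-(β * ν))) := my_summable_aux hx
  have hval : ∑' n : ℕ, ENNReal.ofReal (γ ^ ν * ((n : ℝ) + 1) ^ (-(β * ν))) =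
      ENNReal.ofReal (γ ^ ν * zetaR (β * ν)) := by
    have : ∀ n : ℕ, ENNReal.ofReal (γ ^ ν * ((n : ℝ) + 1) ^ (-(β * ν))) =
        ENNReal.ofReal (γ ^ ν) * ENNReal.ofReal (((n : ℝ) + 1) ^ (-(β * ν))) :=
      fun n => ENNReal.ofReal_mul (by positivity)
    rw [tsum_congr this, ENNReal.tsum_mul_left,
      ← ENNReal.ofReal_tsum_of_nonneg (fun n => by positivity) hsum,
      ← ENNReal.ofReal_mul (by positivity), ← my_zetaR_eq hx]
  have h1 : HasSum (fun n : ℕ => f ((n : ℤ) + 1)) (ENNReal.ofReal (γ ^ ν * zetaR (β * ν))) := by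
    have := ENNReal.summable (f := fun n : ℕ => f ((n : ℤ) + 1)) |>.hasSum
    rwa [tsum_congr (fun n => hside n _ (Or.inl rfl)), hval] at this
  have h2 : HasSum (fun n : ℕ => f (-((n : ℤ) + 1)))
      (ENNReal.ofReal (γ ^ ν * zetaR (β * ν))) := by
    have := ENNReal.summable (f := fun n : ℕ => f (-((n : ℤ) + 1))) |>.hasSum
    rwa [tsum_congr (fun n => hside n _ (Or.inr rfl)), hval] at this
  have h3 : HasSum f (ENNReal.ofReal (γ ^ ν * zetaR (β * ν)) + f 0 +
      ENNReal.ofReal (γ ^ ν * zetaR (β * ν))) := h1.of_add_one_of_neg_add_one h2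
  rw [h3.tsum_eq]
  have hf0 : f 0 = 1 := by simp [hf, rK]
  rw [hf0]
  have hz : 0 ≤ zetaR (β * ν) := my_zetaR_nonneg hx
  rw [← ENNReal.ofReal_one, ← ENNReal.ofReal_add (by positivity) (by norm_num),
    ← ENNReal.ofReal_add (by positivity) (by positivity)]
  congr 1
  ring

/-- Product over a finite index of independent `ℝ≥0∞` sums. -/
lemma my_tsum_pi {ι : Type*} : ∀ (n : ℕ) (f : Fin n → ι → ℝ≥0∞),
    ∑' x : Fin n → ι, ∏ j, f j (x j) = ∏ j, ∑' k, f j k := by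
  intro n
  induction n with
  | zero =>
    intro f
    simp only [Finset.univ_eq_empty, Finset.prod_empty]
    exact tsum_eq_single (fun i => i.elim0) (fun x hx => absurd (Subsingleton.elim x _) hx)
  | succ n ih =>
    intro f
    have he : ∑' x : Fin (n + 1) → ι, ∏ j, f j (x j) =
        ∑' p : ι × (Fin n → ι), ∏ j, f j ((Fin.cons p.1 p.2 : Fin (n+1) → ι) j) := by
      exact ((Fin.consEquiv (fun _ : Fin (n+1) => ι)).tsum_eq
        (fun x => ∏ j, f j (x j))).symm
    rw [he]
    have hterm : ∀ p : ι × (Fin n → ι),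
        ∏ j, f j ((Fin.cons p.1 p.2 : Fin (n+1) → ι) j) =
          f 0 p.1 * ∏ j : Fin n, f j.succ (p.2 j) := by
      intro p
      rw [Fin.prod_univ_succ]
      simp
    rw [tsum_congr hterm, ENNReal.tsum_prod']
    simp_rw [ENNReal.tsum_mul_left, ENNReal.tsum_mul_right]
    rw [ih (fun j => f j.succ), Fin.prod_univ_succ]

/-- Conversion from an `ℝ≥0∞` sum identity to real summability and sum. -/
lemma my_ofReal_conversion {ι : Type*} (f : ι → ℝ) (hf : ∀ i, 0 ≤ f i) (C : ℝ) (hC : 0 ≤ C)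
    (h : ∑' i, ENNReal.ofReal (f i) = ENNReal.ofReal C) :
    Summable f ∧ ∑' i, f i = C := by
  set g : ι → ℝ≥0 := fun i => ⟨f i, hf i⟩ with hg
  have h1 : ∀ i, ENNReal.ofReal (f i) = (g i : ℝ≥0∞) := by
    intro i
    rw [ENNReal.ofReal, Real.toNNReal_of_nonneg (hf i)]
    rfl
  have hne : ∑' i, (g i : ℝ≥0∞) ≠ ⊤ := by
    rw [tsum_congr fun i => (h1 i).symm, h]; exact ENNReal.ofReal_ne_top
  have hgs : Summable g := ENNReal.tsum_coe_ne_top_iff_summable.1 hne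
  have hfs : Summable f := by
    have := NNReal.summable_coe.2 hgs
    exact this
  refine ⟨hfs, ?_⟩
  have h2 : ((∑' i, g i : ℝ≥0) : ℝ≥0∞) = ((C.toNNReal : ℝ≥0) : ℝ≥0∞) := by
    rw [ENNReal.coe_tsum hgs, tsum_congr fun i => (h1 i).symm, h, ENNReal.ofReal]
  have h3 : (∑' i, g i : ℝ≥0) = C.toNNReal := by exact_mod_cast h2
  calc ∑' i, f i = ∑' i, ((g i : ℝ)) := tsum_congr fun i => rfl
    _ = ((∑' i, g i : ℝ≥0) : ℝ) := NNReal.coe_tsum.symm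
    _ = C := by rw [h3, Real.coe_toNNReal _ hC]

lemma my_mu_nonneg (b : ℕ) (hb : 2 ≤ b) {x : ℝ} (hx : 1 < x) : 0 ≤ mu b x := by
  have hb1 : (1 : ℝ) < b := by exact_mod_cast hb
  have hbx : (b : ℝ) ^ (1 : ℝ) < (b : ℝ) ^ x := Real.rpow_lt_rpow_left_iff hb1 |>.2 hx
  rw [Real.rpow_one] at hbx
  have hbxpos : (0 : ℝ) < (b : ℝ) ^ x := Real.rpow_pos_of_pos (by linarith) x
  apply div_nonneg (by nlinarith) (by linarith)

theorem stmt_5 (b : ℕ) (hb : b.Prime) (α β : ℝ) (hα : 1 < α) (hβ : 1 < β)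
    (γ1 γ2 : ℕ → ℝ) (hγ1 : ∀ j, 0 < γ1 j ∧ γ1 j ≤ 1) (hγ2 : ∀ j, 0 < γ2 j ∧ γ2 j ≤ 1)
    (ν : ℝ) (hν : 0 < ν) (hαν : 1 < α * ν) (hβν : 1 < β * ν) (s t : ℕ) :
    Summable (fun p : (Fin s → ℕ) × (Fin t → ℤ) =>
        ((∏ j : Fin s, rho b α (γ1 j) (p.1 j)) * (∏ j : Fin t, rK β (γ2 j) (p.2 j))) ^ ν) ∧
      ∑' p : (Fin s → ℕ) × (Fin t → ℤ),
          ((∏ j : Fin s, rho b α (γ1 j) (p.1 j)) * (∏ j : Fin t, rK β (γ2 j) (p.2 j))) ^ ν =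
        (∏ j : Fin s, (1 + (γ1 j) ^ ν * mu b (α * ν))) *
          ∏ j : Fin t, (1 + 2 * (γ2 j) ^ ν * zetaR (β * ν)) := by
  have hb2 : 2 ≤ b := hb.two_le
  set F : (Fin s → ℕ) × (Fin t → ℤ) → ℝ := fun p =>
    ((∏ j : Fin s, rho b α (γ1 j) (p.1 j)) * (∏ j : Fin t, rK β (γ2 j) (p.2 j))) ^ ν with hF
  set A : Fin s → ℕ → ℝ≥0∞ := fun j k => ENNReal.ofReal (rho b α (γ1 j) k ^ ν) with hA
  set B : Fin t → ℤ → ℝ≥0∞ := fun j l => ENNReal.ofReal (rK β (γ2 j) l ^ ν) with hB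
  set C : ℝ := (∏ j : Fin s, (1 + (γ1 j) ^ ν * mu b (α * ν))) *
      ∏ j : Fin t, (1 + 2 * (γ2 j) ^ ν * zetaR (β * ν)) with hC
  have hmu0 : 0 ≤ mu b (α * ν) := my_mu_nonneg b hb2 hαν
  have hz0 : 0 ≤ zetaR (β * ν) := my_zetaR_nonneg hβν
  have hfac1 : ∀ j : Fin s, 0 ≤ 1 + (γ1 j) ^ ν * mu b (α * ν) := by
    intro j
    have := (hγ1 j).1
    positivity
  have hfac2 : ∀ j : Fin t, 0 ≤ 1 + 2 * (γ2 j) ^ ν * zetaR (β * ν) := by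
    intro j
    have := (hγ2 j).1
    positivity
  have hC0 : 0 ≤ C := by
    apply mul_nonneg <;> exact Finset.prod_nonneg fun j _ => (by first | exact hfac1 j | exact hfac2 j)
  have hFnn : ∀ p, 0 ≤ F p := by
    intro p
    apply Real.rpow_nonneg
    apply mul_nonneg
    · exact Finset.prod_nonneg fun j _ => my_rho_nonneg (hγ1 j).1 _
    · exact Finset.prod_nonneg fun j _ => my_rK_nonneg (hγ2 j).1 _
  have hsplit : ∀ p : (Fin s → ℕ) × (Fin t → ℤ), ENNReal.ofReal (F p) =
      (∏ j : Fin s, A j (p.1 j)) * (∏ j : Fin t, B j (p.2 j)) := by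
    intro p
    have h1 : ∀ j ∈ (Finset.univ : Finset (Fin s)), 0 ≤ rho b α (γ1 j) (p.1 j) :=
      fun j _ => my_rho_nonneg (hγ1 j).1 _
    have h2 : ∀ j ∈ (Finset.univ : Finset (Fin t)), 0 ≤ rK β (γ2 j) (p.2 j) :=
      fun j _ => my_rK_nonneg (hγ2 j).1 _
    rw [hF]
    simp only
    rw [Real.mul_rpow (Finset.prod_nonneg h1) (Finset.prod_nonneg h2),
      ← Real.finset_prod_rpow _ _ h1 ν, ← Real.finset_prod_rpow _ _ h2 ν,
      ENNReal.ofReal_mul (Finset.prod_nonneg fun j _ => by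
        exact Real.rpow_nonneg (h1 j (Finset.mem_univ j)) ν),
      ENNReal.ofReal_prod_of_nonneg (fun j _ => Real.rpow_nonneg (h1 j (Finset.mem_univ j)) ν),
      ENNReal.ofReal_prod_of_nonneg (fun j _ => Real.rpow_nonneg (h2 j (Finset.mem_univ j)) ν)]
  have hEN : ∑' p : (Fin s → ℕ) × (Fin t → ℤ), ENNReal.ofReal (F p) = ENNReal.ofReal C := by
    rw [tsum_congr hsplit, ENNReal.tsum_prod']
    have hinner : ∀ x : Fin s → ℕ,
        ∑' y : Fin t → ℤ, (∏ j : Fin s, A j (x j)) * (∏ j : Fin t, B j (y j)) =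
          (∏ j : Fin s, A j (x j)) * ∑' y : Fin t → ℤ, ∏ j : Fin t, B j (y j) :=
      fun x => ENNReal.tsum_mul_left
    rw [tsum_congr hinner, ENNReal.tsum_mul_right, my_tsum_pi s A, my_tsum_pi t B]
    have hAv : ∀ j : Fin s, ∑' k : ℕ, A j k = ENNReal.ofReal (1 + (γ1 j) ^ ν * mu b (α * ν)) :=
      fun j => my_tsum_rho b hb2 (hγ1 j).1 hν hαν
    have hBv : ∀ j : Fin t, ∑' l : ℤ, B j l =
        ENNReal.ofReal (1 + 2 * (γ2 j) ^ ν * zetaR (β * ν)) :=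
      fun j => my_tsum_rK b (hγ2 j).1 hν hβν
    rw [Finset.prod_congr rfl fun j _ => hAv j, Finset.prod_congr rfl fun j _ => hBv j,
      ← ENNReal.ofReal_prod_of_nonneg (fun j _ => hfac1 j),
      ← ENNReal.ofReal_prod_of_nonneg (fun j _ => hfac2 j),
      ← ENNReal.ofReal_mul (Finset.prod_nonneg fun j _ => hfac1 j)]
  exact my_ofReal_conversion F hFnn C hC0 hEN
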